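/- Let m > 0 and define v₀(r) = √(2r/m)·(1 − ((2r − m)/(2r + m))·log √(2r/m)) for r ≥ m/2. Then v₀ satisfies the ODE v''(r) + v(r)·(1/(4r²) + (m/r³)·(1 + m/(2r))^{-2}) = 0 on (m/2, ∞), with v₀(m/2) = 1 and v₀'(m/2) = 1/m. -/

import Mathlib

noncomputable def radialW (m r : ℝ) : ℝ :=
  m / (r * (2 * r + m))
    - (2 * r - m) / (2 * r + m) * Real.log (Real.sqrt (2 * r / m)) / (2 * r)
    - 4 * m * Real.log (Real.sqrt (2 * r / m)) / (2 * r + m) ^ 2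

noncomputable def radialWd (m r : ℝ) : ℝ :=
  -(m * (4 * r + m)) / (r ^ 2 * (2 * r + m) ^ 2)
    - (4 * m * Real.log (Real.sqrt (2 * r / m)) / (2 * r * (2 * r + m) ^ 2)
        + (2 * r - m) / (2 * r + m) / (4 * r ^ 2)
        - (2 * r - m) / (2 * r + m) * Real.log (Real.sqrt (2 * r / m)) / (2 * r ^ 2))
    - (2 * m / (r * (2 * r + m) ^ 2)
        - 16 * m * Real.log (Real.sqrt (2 * r / m)) / (2 * r + m) ^ 3)

lemma hasDerivAt_radialG (m : ℝ) (hm : 0 < m) {r : ℝ} (hr : 0 < r) :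
    HasDerivAt (fun x => Real.sqrt (2 * x / m)) (1 / (m * Real.sqrt (2 * r / m))) r := by
  have h1 : HasDerivAt (fun x : ℝ => 2 * x / m) (2 / m) r := by
    simpa using ((hasDerivAt_id r).const_mul 2).div_const m
  have hpos : 0 < 2 * r / m := by positivity
  have h2 := (Real.hasDerivAt_sqrt (ne_of_gt hpos)).comp r h1
  have hs : 0 < Real.sqrt (2 * r / m) := Real.sqrt_pos.2 hpos
  refine h2.congr_deriv (Eq.symm ?_)
  set s := Real.sqrt (2 * r / m)
  field_simp

lemma hasDerivAt_radialL (m : ℝ) (hm : 0 < m) {r : ℝ} (hr : 0 < r) :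
    HasDerivAt (fun x => Real.log (Real.sqrt (2 * x / m))) (1 / (2 * r)) r := by
  have hpos : 0 < 2 * r / m := by positivity
  have hs : 0 < Real.sqrt (2 * r / m) := Real.sqrt_pos.2 hpos
  have hss : Real.sqrt (2 * r / m) * Real.sqrt (2 * r / m) = 2 * r / m :=
    Real.mul_self_sqrt hpos.le
  have h := (Real.hasDerivAt_log hs.ne').comp r (hasDerivAt_radialG m hm hr)
  have hss2 : m * (Real.sqrt (2 * r / m) * Real.sqrt (2 * r / m)) = 2 * r := by
    rw [hss]; field_simp
  refine h.congr_deriv (Eq.symm ?_)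
  set s := Real.sqrt (2 * r / m)
  rw [eq_comm]
  field_simp
  linear_combination -hss2

lemma hasDerivAt_radialA (m : ℝ) {r : ℝ} (h0 : 2 * r + m ≠ 0) :
    HasDerivAt (fun x => (2 * x - m) / (2 * x + m)) (4 * m / (2 * r + m) ^ 2) r := by
  have hn : HasDerivAt (fun x : ℝ => 2 * x - m) 2 r := by
    simpa using ((hasDerivAt_id r).const_mul 2).sub_const m
  have hd : HasDerivAt (fun x : ℝ => 2 * x + m) 2 r := by
    simpa using ((hasDerivAt_id r).const_mul 2).add_const m
  have h := hn.div hd h0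
  refine h.congr_deriv (Eq.symm ?_)
  field_simp
  ring

lemma hasDerivAt_radialV (m : ℝ) (hm : 0 < m) {r : ℝ} (hr : 0 < r) :
    HasDerivAt (fun x => Real.sqrt (2 * x / m) *
        (1 - (2 * x - m) / (2 * x + m) * Real.log (Real.sqrt (2 * x / m))))
      (Real.sqrt (2 * r / m) * radialW m r) r := by
  have hpos : 0 < 2 * r / m := by positivity
  have hs : 0 < Real.sqrt (2 * r / m) := Real.sqrt_pos.2 hpos
  have hss : Real.sqrt (2 * r / m) * Real.sqrt (2 * r / m) = 2 * r / m :=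
    Real.mul_self_sqrt hpos.le
  have h0 : 2 * r + m ≠ 0 := by positivity
  have hG := hasDerivAt_radialG m hm hr
  have hL := hasDerivAt_radialL m hm hr
  have hA := hasDerivAt_radialA m h0
  have hinner : HasDerivAt
      (fun x => 1 - (2 * x - m) / (2 * x + m) * Real.log (Real.sqrt (2 * x / m)))
      (-(4 * m / (2 * r + m) ^ 2 * Real.log (Real.sqrt (2 * r / m))
          + (2 * r - m) / (2 * r + m) * (1 / (2 * r)))) r := by
    refine ((hasDerivAt_const r 1).sub (hA.mul hL)).congr_deriv ?_
    ring
  have hss2 : m * (Real.sqrt (2 * r / m) * Real.sqrt (2 * r / m)) = 2 * r := by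
    rw [hss]; field_simp
  have h := hG.mul hinner
  refine h.congr_deriv (Eq.symm ?_)
  have key : 1 / (m * Real.sqrt (2 * r / m)) = Real.sqrt (2 * r / m) / (2 * r) := by
    rw [div_eq_div_iff (by positivity) (by positivity)]
    linear_combination -hss2
  rw [key]
  unfold radialW
  set s := Real.sqrt (2 * r / m)
  field_simp
  ring

lemma hasDerivAt_radialW (m : ℝ) (hm : 0 < m) {r : ℝ} (hr : 0 < r) :
    HasDerivAt (radialW m) (radialWd m r) r := by
  have h0 : 2 * r + m ≠ 0 := by positivity
  have hr0 : r * (2 * r + m) ≠ 0 := by positivity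
  have hL := hasDerivAt_radialL m hm hr
  have hA := hasDerivAt_radialA m h0
  have hden : HasDerivAt (fun x : ℝ => x * (2 * x + m)) (1 * (2 * r + m) + r * 2) r :=
    (hasDerivAt_id r).mul (by simpa using ((hasDerivAt_id r).const_mul 2).add_const m)
  have h1 : HasDerivAt (fun x : ℝ => m / (x * (2 * x + m)))
      ((0 * (r * (2 * r + m)) - m * (1 * (2 * r + m) + r * 2)) / (r * (2 * r + m)) ^ 2) r :=
    (hasDerivAt_const r m).div hden hr0
  have h2x : HasDerivAt (fun x : ℝ => 2 * x) 2 r := by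
    simpa using (hasDerivAt_id r).const_mul 2
  have h2 : HasDerivAt
      (fun x => (2 * x - m) / (2 * x + m) * Real.log (Real.sqrt (2 * x / m)) / (2 * x))
      (((4 * m / (2 * r + m) ^ 2 * Real.log (Real.sqrt (2 * r / m))
          + (2 * r - m) / (2 * r + m) * (1 / (2 * r))) * (2 * r)
        - (2 * r - m) / (2 * r + m) * Real.log (Real.sqrt (2 * r / m)) * 2) / (2 * r) ^ 2) r :=
    (hA.mul hL).div h2x (by positivity)
  have hden2 : HasDerivAt (fun x : ℝ => (2 * x + m) ^ 2)
      (2 * (2 * r + m) ^ 1 * 2) r := by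
    exact (by simpa using ((hasDerivAt_id r).const_mul 2).add_const m :
      HasDerivAt (fun x : ℝ => 2 * x + m) 2 r).pow 2
  have h3 : HasDerivAt (fun x => 4 * m * Real.log (Real.sqrt (2 * x / m)) / (2 * x + m) ^ 2)
      ((4 * m * (1 / (2 * r)) * (2 * r + m) ^ 2
        - 4 * m * Real.log (Real.sqrt (2 * r / m)) * (2 * (2 * r + m) ^ 1 * 2))
        / ((2 * r + m) ^ 2) ^ 2) r :=
    (hL.const_mul (4 * m)).div hden2 (by positivity)
  have h := (h1.sub h2).sub h3
  refine h.congr_deriv (Eq.symm ?_)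
  unfold radialWd
  set s := Real.sqrt (2 * r / m)
  field_simp
  ring

set_option maxHeartbeats 4000000 in
/-- For `m > 0`, the explicit function `v₀(r) = √(2r/m)(1 − ((2r−m)/(2r+m)) log √(2r/m))`
solves `v'' + v·(1/(4r²) + (m/r³)(1 + m/(2r))⁻²) = 0` on `(m/2, ∞)` with `v₀(m/2) = 1`
and `v₀'(m/2) = 1/m`. -/
theorem radial_jacobi_field_explicit (m : ℝ) (hm : 0 < m) :
    let v : ℝ → ℝ := fun r =>
      Real.sqrt (2 * r / m) *
        (1 - (2 * r - m) / (2 * r + m) * Real.log (Real.sqrt (2 * r / m)))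
    (∀ r : ℝ, m / 2 < r →
        deriv (deriv v) r +
          v r * (1 / (4 * r ^ 2) + (m / r ^ 3) * (1 + m / (2 * r))⁻¹ ^ 2) = 0) ∧
      v (m / 2) = 1 ∧ deriv v (m / 2) = 1 / m := by
  intro v
  have hv : v = fun r => Real.sqrt (2 * r / m) *
      (1 - (2 * r - m) / (2 * r + m) * Real.log (Real.sqrt (2 * r / m))) := rfl
  refine ⟨?_, ?_, ?_⟩
  · intro r hr'
    have hr : 0 < r := lt_trans (by positivity) hr'
    have hpos : 0 < 2 * r / m := by positivity
    have hs : 0 < Real.sqrt (2 * r / m) := Real.sqrt_pos.2 hpos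
    have hss : Real.sqrt (2 * r / m) * Real.sqrt (2 * r / m) = 2 * r / m :=
      Real.mul_self_sqrt hpos.le
    have h0 : 2 * r + m ≠ 0 := by positivity
    have hev : deriv v =ᶠ[nhds r] fun x => Real.sqrt (2 * x / m) * radialW m x := by
      filter_upwards [eventually_gt_nhds hr] with x hx
      rw [hv]
      exact (hasDerivAt_radialV m hm hx).deriv
    rw [hev.deriv_eq]
    have h2 : HasDerivAt (fun x => Real.sqrt (2 * x / m) * radialW m x)
        (1 / (m * Real.sqrt (2 * r / m)) * radialW m r
          + Real.sqrt (2 * r / m) * radialWd m r) r :=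
      (hasDerivAt_radialG m hm hr).mul (hasDerivAt_radialW m hm hr)
    rw [h2.deriv]
    have hss2 : m * (Real.sqrt (2 * r / m) * Real.sqrt (2 * r / m)) = 2 * r := by
      rw [hss]; field_simp
    have key : 1 / (m * Real.sqrt (2 * r / m)) = Real.sqrt (2 * r / m) / (2 * r) := by
      rw [div_eq_div_iff (by positivity) (by positivity)]
      linear_combination -hss2
    rw [key]
    simp only [hv]
    have hq : (1 : ℝ) + m / (2 * r) ≠ 0 := by positivity
    unfold radialW radialWd
    have hs' : Real.sqrt (2 * r / m) ≠ 0 := hs.ne'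
    obtain ⟨s, hgen⟩ : ∃ s, Real.sqrt (2 * r / m) = s := ⟨_, rfl⟩
    rw [hgen] at hss2 hs' ⊢
    field_simp
    ring
  · show Real.sqrt (2 * (m / 2) / m) *
        (1 - (2 * (m / 2) - m) / (2 * (m / 2) + m) * Real.log (Real.sqrt (2 * (m / 2) / m))) = 1
    have h1 : 2 * (m / 2) / m = 1 := by field_simp
    rw [h1, Real.sqrt_one, Real.log_one]
    norm_num
  · have hr : (0 : ℝ) < m / 2 := by positivity
    have hd := (hasDerivAt_radialV m hm hr).deriv
    rw [hv]
    rw [hd]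
    have h1 : 2 * (m / 2) / m = 1 := by field_simp
    unfold radialW
    rw [h1, Real.sqrt_one, Real.log_one]
    have hm2 : m / 2 * (2 * (m / 2) + m) = m ^ 2 := by ring
    rw [hm2]
    field_simp
    ring
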